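/- Let g be a Laurent polynomial in n variables over ℂ whose Newton polytope A (contained in the nonnegative orthant) intersects all coordinate hyperplanes, and let γ_1, γ_2 ∈ (ℤ^n)* have strictly positive integer components, such that A^{γ_1} and A^{γ_2} are vertices of A. Then the ratio of the coefficient of g at the vertex A^{γ_1} to the coefficient at A^{γ_2} equals (−1)^{⟨γ_1, A^{γ_1}⟩ + ⟨γ_2, A^{γ_2}⟩} times the product of the roots in ℂ∖{0} of the one-variable Laurent polynomial t ↦ g(t^{γ_2} + t^{−γ_1}), where t^{γ} denotes the point (t^{γ(e_1)}, ..., t^{γ(e_n)}). -/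

import Mathlib

/-- ratio of the two vertex coefficients of a polynomial `g`
whose Newton polytope meets every coordinate hyperplane, at the vertices
selected by positive covectors `γ₁, γ₂`, equals
`(−1)^{⟨γ₁,A^{γ₁}⟩+⟨γ₂,A^{γ₂}⟩}` times the product of the nonzero roots of
the one-variable Laurent polynomial `t ↦ g(t^{γ₂} + t^{−γ₁})`, here realized
as the polynomial `H` with `H(t) = t^D · g(t^{γ₂} + t^{−γ₁})` for `t ≠ 0`. -/
theorem stmt_15 (n : ℕ) (g : MvPolynomial (Fin n) ℂ) (hg : g ≠ 0)
    (hcoord : ∀ i : Fin n, ∃ a ∈ g.support, a i = 0)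
    (γ1 γ2 : Fin n → ℕ) (hγ1 : ∀ i, 0 < γ1 i) (hγ2 : ∀ i, 0 < γ2 i)
    (a1 a2 : Fin n →₀ ℕ) (ha1 : a1 ∈ g.support) (ha2 : a2 ∈ g.support)
    (hv1 : ∀ b ∈ g.support, b ≠ a1 → ∑ i, γ1 i * b i < ∑ i, γ1 i * a1 i)
    (hv2 : ∀ b ∈ g.support, b ≠ a2 → ∑ i, γ2 i * b i < ∑ i, γ2 i * a2 i)
    (H : Polynomial ℂ) (D : ℕ) (hH : H ≠ 0)
    (hHeval : ∀ t : ℂ, t ≠ 0 → H.eval t =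
      t ^ D * MvPolynomial.eval (fun i => t ^ (γ2 i : ℤ) + t ^ (-(γ1 i : ℤ))) g) :
    g.coeff a1 / g.coeff a2 =
      (-1 : ℂ) ^ (∑ i, γ1 i * a1 i + ∑ i, γ2 i * a2 i) *
        (H.roots.filter (· ≠ (0 : ℂ))).prod := by
  classical
  set S1 := ∑ i, γ1 i * a1 i with hS1def
  set S2 := ∑ i, γ2 i * a2 i with hS2def
  have ha1c : g.coeff a1 ≠ 0 := MvPolynomial.mem_support_iff.mp ha1
  have ha2c : g.coeff a2 ≠ 0 := MvPolynomial.mem_support_iff.mp ha2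
  have hle1 : ∀ a ∈ g.support, ∑ i, γ1 i * a i ≤ S1 := by
    intro a ha
    by_cases h : a = a1
    · subst h; exact le_rfl
    · exact (hv1 a ha h).le
  have hle2 : ∀ a ∈ g.support, ∑ i, γ2 i * a i ≤ S2 := by
    intro a ha
    by_cases h : a = a2
    · subst h; exact le_rfl
    · exact (hv2 a ha h).le
  -- the auxiliary polynomial
  set m : (Fin n →₀ ℕ) → Polynomial ℂ :=
    fun a => ∏ i, (Polynomial.X ^ (γ1 i + γ2 i) + 1) ^ a i with hmdef
  set Q : Polynomial ℂ := ∑ a ∈ g.support,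
    Polynomial.C (g.coeff a) * Polynomial.X ^ (S1 - ∑ i, γ1 i * a i) * m a with hQdef
  have hmonicfac : ∀ i : Fin n, (Polynomial.X ^ (γ1 i + γ2 i) + (1 : Polynomial ℂ)).Monic := by
    intro i
    apply Polynomial.monic_X_pow_add
    rw [Polynomial.degree_one]
    exact_mod_cast Nat.add_pos_left (hγ1 i) (γ2 i)
  have hmmonic : ∀ a : Fin n →₀ ℕ, (m a).Monic := by
    intro a
    exact Polynomial.monic_prod_of_monic _ _ fun i _ => (hmonicfac i).pow _
  have hmdeg : ∀ a : Fin n →₀ ℕ, (m a).natDegree = ∑ i, (γ1 i + γ2 i) * a i := by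
    intro a
    rw [hmdef]
    rw [Polynomial.natDegree_prod _ _ (fun i _ => ((hmonicfac i).pow _).ne_zero)]
    congr 1
    funext i
    rw [Polynomial.natDegree_pow]
    have : (Polynomial.X ^ (γ1 i + γ2 i) + (1 : Polynomial ℂ)).natDegree = γ1 i + γ2 i := by
      rw [← Polynomial.C_1, Polynomial.natDegree_X_pow_add_C]
    rw [this, Nat.mul_comm]
  -- evaluation of Q away from 0
  have hQeval : ∀ t : ℂ, t ≠ 0 → Q.eval t =
      t ^ S1 * MvPolynomial.eval (fun i => t ^ (γ2 i : ℤ) + t ^ (-(γ1 i : ℤ))) g := by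
    intro t ht
    rw [MvPolynomial.eval_eq', hQdef, Polynomial.eval_finset_sum, Finset.mul_sum]
    apply Finset.sum_congr rfl
    intro a ha
    have hfac : ∀ i, (t ^ (γ2 i : ℤ) + t ^ (-(γ1 i : ℤ))) * t ^ (γ1 i) =
        t ^ (γ1 i + γ2 i) + 1 := by
      intro i
      rw [zpow_neg, zpow_natCast, zpow_natCast, pow_add]
      field_simp
    simp only [Polynomial.eval_mul, Polynomial.eval_C, Polynomial.eval_pow, Polynomial.eval_X,
      hmdef, Polynomial.eval_prod, Polynomial.eval_add, Polynomial.eval_one]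
    have hprod : ∏ i, ((t : ℂ) ^ (γ1 i + γ2 i) + 1) ^ a i
        = (∏ i, (t ^ (γ2 i : ℤ) + t ^ (-(γ1 i : ℤ))) ^ a i) * t ^ (∑ i, γ1 i * a i) := by
      rw [← Finset.prod_pow_eq_pow_sum, ← Finset.prod_mul_distrib]
      apply Finset.prod_congr rfl
      intro i _
      rw [pow_mul, ← mul_pow, hfac i]
    have h2 : (t : ℂ) ^ (S1 - ∑ i, γ1 i * a i) * t ^ (∑ i, γ1 i * a i) = t ^ S1 := by
      rw [← pow_add, Nat.sub_add_cancel (hle1 a ha)]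
    rw [mul_assoc, hprod]
    linear_combination (MvPolynomial.coeff a g * ∏ i, ((t : ℂ) ^ (γ2 i : ℤ) + t ^ (-(γ1 i : ℤ))) ^ a i) * h2
  -- key polynomial identity
  have key : Polynomial.X ^ S1 * H = Polynomial.X ^ D * Q := by
    have h0 : Polynomial.X ^ S1 * H - Polynomial.X ^ D * Q = 0 := by
      apply Polynomial.eq_zero_of_infinite_isRoot
      apply Set.Infinite.mono (s := ({0}ᶜ : Set ℂ))
      · intro t ht
        have ht' : t ≠ 0 := ht
        simp only [Set.mem_setOf_eq, Polynomial.IsRoot, Polynomial.eval_sub,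
          Polynomial.eval_mul, Polynomial.eval_pow, Polynomial.eval_X]
        rw [hHeval t ht', hQeval t ht']
        ring
      · exact Set.Finite.infinite_compl (Set.finite_singleton 0)
    exact sub_eq_zero.mp h0
  -- Q at 0
  have hQ0 : Q.eval 0 = g.coeff a1 := by
    rw [hQdef, Polynomial.eval_finset_sum, Finset.sum_eq_single a1]
    · simp only [Polynomial.eval_mul, Polynomial.eval_C, Polynomial.eval_pow, Polynomial.eval_X,
        hmdef, Polynomial.eval_prod, Polynomial.eval_add, Polynomial.eval_one]
      rw [Nat.sub_self, pow_zero]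
      have hone : ∀ i : Fin n, ((0:ℂ) ^ (γ1 i + γ2 i) + 1) ^ a1 i = 1 := by
        intro i
        rw [zero_pow (by have := hγ1 i; omega), zero_add, one_pow]
      simp [hone]
    · intro b hb hne
      have hlt := hv1 b hb hne
      simp only [Polynomial.eval_mul, Polynomial.eval_C, Polynomial.eval_pow, Polynomial.eval_X]
      rw [zero_pow (by omega)]
      ring
    · intro h; exact absurd ha1 h
  have hQne : Q ≠ 0 := fun h => ha1c (by rw [← hQ0, h, Polynomial.eval_zero])
  -- degrees of the terms of Q
  have hsum_split : ∀ a : Fin n →₀ ℕ,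
      ∑ i, (γ1 i + γ2 i) * a i = (∑ i, γ1 i * a i) + ∑ i, γ2 i * a i := by
    intro a
    rw [← Finset.sum_add_distrib]
    exact Finset.sum_congr rfl fun i _ => by ring
  have hterm_deg : ∀ a ∈ g.support,
      (Polynomial.X ^ (S1 - ∑ i, γ1 i * a i) * m a).natDegree = S1 + ∑ i, γ2 i * a i := by
    intro a ha
    rw [(Polynomial.monic_X_pow _).natDegree_mul (hmmonic a), Polynomial.natDegree_X_pow,
      hmdeg a, hsum_split a]
    have := hle1 a ha
    omega
  have hQtop : Q.coeff (S1 + S2) = g.coeff a2 := by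
    rw [hQdef, Polynomial.finset_sum_coeff, Finset.sum_eq_single a2]
    · rw [mul_assoc, Polynomial.coeff_C_mul]
      have hm : (Polynomial.X ^ (S1 - ∑ i, γ1 i * a2 i) * m a2).Monic :=
        (Polynomial.monic_X_pow _).mul (hmmonic a2)
      have hd : S1 + S2 = (Polynomial.X ^ (S1 - ∑ i, γ1 i * a2 i) * m a2).natDegree := by
        rw [hterm_deg a2 ha2]
      rw [hd, hm.coeff_natDegree, mul_one]
    · intro b hb hne
      have hlt := hv2 b hb hne
      rw [mul_assoc, Polynomial.coeff_C_mul, Polynomial.coeff_eq_zero_of_natDegree_lt, mul_zero]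
      rw [hterm_deg b hb]
      omega
    · intro h; exact absurd ha2 h
  have hQdegle : Q.natDegree ≤ S1 + S2 := by
    rw [hQdef]
    apply Polynomial.natDegree_sum_le_of_forall_le
    intro a ha
    rw [mul_assoc]
    refine le_trans (Polynomial.natDegree_C_mul_le _ _) ?_
    rw [hterm_deg a ha]
    have := hle2 a ha
    omega
  have hQdeg : Q.natDegree = S1 + S2 :=
    le_antisymm hQdegle (Polynomial.le_natDegree_of_ne_zero (by rw [hQtop]; exact ha2c))
  have hQlead : Q.leadingCoeff = g.coeff a2 := by
    rw [Polynomial.leadingCoeff, hQdeg, hQtop]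
  -- roots of H vs roots of Q
  have hlhs_ne : Polynomial.X ^ S1 * H ≠ 0 :=
    mul_ne_zero (pow_ne_zero _ Polynomial.X_ne_zero) hH
  have hroots : S1 • ({0} : Multiset ℂ) + H.roots = D • ({0} : Multiset ℂ) + Q.roots := by
    have h1 := Polynomial.roots_mul hlhs_ne
    have h2 := Polynomial.roots_mul (key ▸ hlhs_ne : Polynomial.X ^ D * Q ≠ 0)
    rw [Polynomial.roots_X_pow] at h1 h2
    rw [← h1, ← h2, key]
  have h0Q : ∀ r ∈ Q.roots, r ≠ (0 : ℂ) := by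
    intro r hr h
    subst h
    exact ha1c (by rw [← hQ0]; exact Polynomial.isRoot_of_mem_roots hr)
  have hzsmul : ∀ (k : ℕ), (k • ({0} : Multiset ℂ)).filter (· ≠ (0:ℂ)) = 0 := by
    intro k
    rw [Multiset.nsmul_singleton, Multiset.filter_eq_nil]
    intro b hb
    rw [Multiset.eq_of_mem_replicate hb]
    simp
  have hfilter : H.roots.filter (· ≠ (0 : ℂ)) = Q.roots := by
    have := congrArg (Multiset.filter (· ≠ (0:ℂ))) hroots
    rw [Multiset.filter_add, Multiset.filter_add, hzsmul, hzsmul, zero_add, zero_add,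
      Multiset.filter_eq_self.mpr h0Q] at this
    exact this
  -- Vieta for Q
  have hsplit : Polynomial.Splits Q := IsAlgClosed.splits Q
  have hcard : Multiset.card Q.roots = S1 + S2 := by
    rw [Polynomial.splits_iff_card_roots.mp hsplit, hQdeg]
  have hfact := hsplit.eq_prod_roots
  have hv := congrArg (Polynomial.eval 0) hfact
  rw [hQ0, hQlead, Polynomial.eval_mul, Polynomial.eval_C, Polynomial.eval_multiset_prod,
    Multiset.map_map] at hv
  have hmapneg : Multiset.map (Polynomial.eval 0 ∘ fun a => Polynomial.X - Polynomial.C a)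
      Q.roots = Multiset.map Neg.neg Q.roots := by
    apply Multiset.map_congr rfl
    intro r _
    simp
  rw [hmapneg, Multiset.prod_map_neg, hcard] at hv
  -- conclude
  rw [hfilter, div_eq_iff ha2c]
  linear_combination hv
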